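/- arXiv:1507.00283 — 2 statements merged into one kernel-verified Lean document; each statement's English description precedes it below -/
import Mathlib

section
/- The Jacobi symmetrizer applied to any polynomial yields a symmetric polynomial: for any polynomial b in variables x_1,...,x_n over a field of characteristic zero, the sum over all permutations w in S_n of w·(b / ∏_{i<j}(x_j - x_i)) is a symmetric polynomial in x_1,...,x_n (in particular, the a priori rational expression is a polynomial). -/
open MvPolynomial

section JacobiAux

open Finset

set_option linter.unusedSectionVars false

variable {K : Type*} [Field K] [CharZero K] {n : ℕ}

lemma jacobiAux_prod_pairs_eq {M : Type*} [CommMonoid M] (f : Fin n → Fin n → M) :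
    ∏ pr ∈ Finset.univ.filter (fun pr : Fin n × Fin n => pr.1 < pr.2), f pr.1 pr.2 =
      ∏ i : Fin n, ∏ j ∈ Finset.Ioi i, f i j := by
  rw [← Finset.univ_product_univ, Finset.prod_filter, Finset.prod_product]
  refine Finset.prod_congr rfl fun i _ => ?_
  rw [← Finset.prod_filter, Finset.filter_lt_eq_Ioi]

noncomputable def jacobiDelta (K : Type*) [Field K] (n : ℕ) : MvPolynomial (Fin n) K :=
  ∏ pr ∈ Finset.univ.filter (fun pr : Fin n × Fin n => pr.1 < pr.2), (X pr.2 - X pr.1)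

noncomputable def jacobiSgn (K : Type*) [Field K] {n : ℕ} (w : Equiv.Perm (Fin n)) :
    MvPolynomial (Fin n) K :=
  ((Equiv.Perm.sign w : ℤ) : MvPolynomial (Fin n) K)

lemma jacobiSgn_mul_self (w : Equiv.Perm (Fin n)) : (jacobiSgn K w) * jacobiSgn K w = 1 := by
  rw [jacobiSgn, ← Int.cast_mul, ← Units.val_mul, Int.units_mul_self, Units.val_one, Int.cast_one]

lemma jacobiSgn_ne_zero (w : Equiv.Perm (Fin n)) : (jacobiSgn K w) ≠ 0 := by
  intro h
  have := jacobiSgn_mul_self (K := K) w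
  rw [h, mul_zero] at this
  exact zero_ne_one this

lemma jacobiSgn_mul (v w : Equiv.Perm (Fin n)) :
    jacobiSgn K (v * w) = jacobiSgn K v * jacobiSgn K w := by
  rw [jacobiSgn, jacobiSgn, jacobiSgn, map_mul, ← Int.cast_mul, Units.val_mul]

lemma jacobiRename_sgn (f : Fin n → Fin n) (w : Equiv.Perm (Fin n)) :
    rename f (jacobiSgn K w) = jacobiSgn K w := by
  rw [jacobiSgn, map_intCast]

lemma jacobiDelta_eq_det :
    jacobiDelta K n =
      Matrix.det (Matrix.vandermonde fun i : Fin n => (X i : MvPolynomial (Fin n) K)) := by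
  rw [Matrix.det_vandermonde, jacobiDelta,
    jacobiAux_prod_pairs_eq (fun i j => (X j - X i : MvPolynomial (Fin n) K))]

lemma jacobiRename_delta (w : Equiv.Perm (Fin n)) :
    rename ⇑w (jacobiDelta K n) = jacobiSgn K w * jacobiDelta K n := by
  have h1 : rename ⇑w (jacobiDelta K n) =
      Matrix.det (Matrix.vandermonde fun i : Fin n => (X (w i) : MvPolynomial (Fin n) K)) := by
    rw [Matrix.det_vandermonde, jacobiDelta, map_prod]
    rw [← jacobiAux_prod_pairs_eq (fun i j => (X (w j) - X (w i) : MvPolynomial (Fin n) K))]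
    refine Finset.prod_congr rfl fun pr _ => by simp
  have h2 : (Matrix.vandermonde fun i : Fin n => (X (w i) : MvPolynomial (Fin n) K)) =
      (Matrix.vandermonde fun i : Fin n => (X i : MvPolynomial (Fin n) K)).submatrix w id := by
    ext i j; simp [Matrix.vandermonde]
  rw [h1, h2, Matrix.det_permute, ← jacobiDelta_eq_det, jacobiSgn]

lemma jacobiDelta_ne_zero : (jacobiDelta K n : MvPolynomial (Fin n) K) ≠ 0 := by
  rw [jacobiDelta]
  refine Finset.prod_ne_zero_iff.2 fun pr hpr => ?_
  simp only [Finset.mem_filter] at hpr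
  rw [sub_ne_zero]
  exact fun h => absurd (X_injective h).symm (ne_of_lt hpr.2)

lemma jacobiPrime_X_sub_X {i j : Fin n} (h : i ≠ j) :
    Prime (X j - X i : MvPolynomial (Fin n) K) := by
  let e : Option {k : Fin n // k ≠ j} ≃ Fin n := Equiv.optionSubtypeNe j
  let φ := (renameEquiv K e.symm).trans (optionEquivLeft K {k : Fin n // k ≠ j})
  rw [← MulEquiv.prime_iff φ.toMulEquiv]
  have : φ (X j - X i) = Polynomial.X - Polynomial.C (X ⟨i, h⟩) := by
    show (optionEquivLeft K _) (rename e.symm (X j - X i)) = _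
    rw [map_sub, rename_X, rename_X, Equiv.optionSubtypeNe_symm_self,
      Equiv.optionSubtypeNe_symm_of_ne h, map_sub, optionEquivLeft_X_none,
      optionEquivLeft_X_some]
  rw [show φ.toMulEquiv (X j - X i) = φ (X j - X i) from rfl, this]
  exact Polynomial.prime_X_sub_C _

lemma jacobiNot_dvd_X_sub_X {i j a b : Fin n} (hij : i < j) (hab : a < b)
    (hne : (i, j) ≠ (a, b)) :
    ¬ (X j - X i : MvPolynomial (Fin n) K) ∣ (X b - X a) := by
  rintro ⟨q, hq⟩
  by_cases hb : b = i ∨ b = j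
  · obtain ⟨hai, haj⟩ : a ≠ i ∧ a ≠ j := by
      rcases hb with rfl | rfl
      · exact ⟨ne_of_lt hab, ne_of_lt (hab.trans hij)⟩
      · exact ⟨fun h => hne (by rw [h]), ne_of_lt hab⟩
    have := congrArg (eval (fun k : Fin n => if k = a then (1 : K) else 0)) hq
    simp [hai.symm, haj.symm, (ne_of_lt hab).symm, ne_of_lt hab] at this
  · push_neg at hb
    have := congrArg (eval (fun k : Fin n => if k = b then (1 : K) else 0)) hq
    simp [hb.1.symm, hb.2.symm, ne_of_lt hab, (ne_of_lt hab).symm] at this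

lemma jacobiDvd_sub_rename_swap (i j : Fin n) (f : MvPolynomial (Fin n) K) :
    (X j - X i : MvPolynomial (Fin n) K) ∣ f - rename ⇑(Equiv.swap i j) f := by
  induction f using MvPolynomial.induction_on with
  | C a => simp
  | add p q hp hq =>
    have : p + q - rename ⇑(Equiv.swap i j) (p + q) =
        (p - rename ⇑(Equiv.swap i j) p) + (q - rename ⇑(Equiv.swap i j) q) := by
      rw [map_add]; ring
    rw [this]; exact dvd_add hp hq
  | mul_X p k hp =>
    have hxk : (X j - X i : MvPolynomial (Fin n) K) ∣ X k - X (Equiv.swap i j k) := by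
      rcases eq_or_ne k i with rfl | hki
      · rw [Equiv.swap_apply_left]; exact ⟨-1, by ring⟩
      rcases eq_or_ne k j with rfl | hkj
      · rw [Equiv.swap_apply_right]
      · rw [Equiv.swap_apply_of_ne_of_ne hki hkj, sub_self]
        exact dvd_zero _
    have : p * X k - rename ⇑(Equiv.swap i j) (p * X k) =
        (p - rename ⇑(Equiv.swap i j) p) * X (Equiv.swap i j k) +
          p * (X k - X (Equiv.swap i j k)) := by
      rw [map_mul, rename_X]; ring
    rw [this]
    exact dvd_add (hp.mul_right _) (hxk.mul_left _)

lemma jacobiProd_pairs_dvd (A : MvPolynomial (Fin n) K)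
    (hA : ∀ pr : Fin n × Fin n, pr.1 < pr.2 → (X pr.2 - X pr.1 : MvPolynomial (Fin n) K) ∣ A)
    (S : Finset (Fin n × Fin n)) (hS : ∀ pr ∈ S, pr.1 < pr.2) :
    (∏ pr ∈ S, (X pr.2 - X pr.1 : MvPolynomial (Fin n) K)) ∣ A := by
  classical
  induction S using Finset.induction_on with
  | empty => simpa using one_dvd A
  | insert _ _ hpr _ =>
    rename_i pr S ih
    have hS' : ∀ p ∈ S, p.1 < p.2 := fun p hp => hS p (Finset.mem_insert_of_mem hp)
    obtain ⟨q, hq⟩ := ih hS'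
    have hprlt : pr.1 < pr.2 := hS pr (Finset.mem_insert_self pr S)
    have hp : Prime (X pr.2 - X pr.1 : MvPolynomial (Fin n) K) :=
      jacobiPrime_X_sub_X (ne_of_lt hprlt)
    have hdvd : (X pr.2 - X pr.1 : MvPolynomial (Fin n) K) ∣ q := by
      rcases hp.dvd_mul.1 (hq ▸ hA pr hprlt) with h | h
      · exfalso
        obtain ⟨pr', hpr', hd⟩ := (Prime.dvd_finset_prod_iff hp _).1 h
        exact jacobiNot_dvd_X_sub_X hprlt (hS' pr' hpr')
          (fun he => hpr ((show pr = pr' from he) ▸ hpr')) hd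
      · exact h
    obtain ⟨q', hq'⟩ := hdvd
    rw [Finset.prod_insert hpr]
    exact ⟨q', by rw [hq, hq']; ring⟩

noncomputable def jacobiAsum (K : Type*) [Field K] (n : ℕ) (b : MvPolynomial (Fin n) K) :
    MvPolynomial (Fin n) K :=
  ∑ w : Equiv.Perm (Fin n), jacobiSgn K w * rename ⇑w b

lemma jacobiRename_asum (b : MvPolynomial (Fin n) K) (σ : Equiv.Perm (Fin n)) :
    rename ⇑σ (jacobiAsum K n b) = jacobiSgn K σ * jacobiAsum K n b := by
  unfold jacobiAsum
  rw [map_sum, Finset.mul_sum]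
  refine Fintype.sum_equiv (Equiv.mulLeft σ) _ _ fun w => ?_
  rw [map_mul, jacobiRename_sgn, rename_rename]
  have hc : ⇑σ ∘ ⇑w = ⇑(σ * w) := rfl
  rw [hc, Equiv.coe_mulLeft, jacobiSgn_mul, ← mul_assoc, ← mul_assoc,
    jacobiSgn_mul_self σ, one_mul]

lemma jacobiDelta_dvd_asum (b : MvPolynomial (Fin n) K) :
    jacobiDelta K n ∣ jacobiAsum K n b := by
  rw [jacobiDelta]
  apply jacobiProd_pairs_dvd
  · intro pr hlt
    set A := jacobiAsum K n b with hA
    have hsw : rename ⇑(Equiv.swap pr.1 pr.2) A = -A := by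
      rw [hA, jacobiRename_asum, jacobiSgn, Equiv.Perm.sign_swap (ne_of_lt hlt)]
      push_cast
      ring
    have hd := jacobiDvd_sub_rename_swap pr.1 pr.2 A
    rw [hsw, sub_neg_eq_add] at hd
    have key : A = C (2⁻¹ : K) * (A + A) := by
      rw [← two_mul, ← mul_assoc, ← map_ofNat (C : K →+* MvPolynomial (Fin n) K) 2, ← C_mul]
      norm_num
    rw [key]
    exact hd.mul_left _
  · intro pr hpr
    simpa using (Finset.mem_filter.1 hpr).2

end JacobiAux

/-- The Jacobi symmetrizer applied to any polynomial yields a symmetric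
polynomial: the sum over all `w ∈ Sₙ` of `w · (b / ∏_{i<j}(x_j - x_i))`, computed in the
field of rational functions `K(x₁, …, xₙ)`, is (the image of) a symmetric polynomial. -/
theorem jacobi_symmetrizer_is_symmetric_polynomial
    {K : Type*} [Field K] [CharZero K] (n : ℕ) (b : MvPolynomial (Fin n) K) :
    ∃ p : MvPolynomial (Fin n) K, p.IsSymmetric ∧
      ∑ w : Equiv.Perm (Fin n),
          algebraMap (MvPolynomial (Fin n) K) (FractionRing (MvPolynomial (Fin n) K))
              (rename ⇑w b) /
            algebraMap (MvPolynomial (Fin n) K) (FractionRing (MvPolynomial (Fin n) K))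
              (rename ⇑w
                (∏ pr ∈ Finset.univ.filter (fun pr : Fin n × Fin n => pr.1 < pr.2),
                  (X pr.2 - X pr.1))) =
        algebraMap (MvPolynomial (Fin n) K) (FractionRing (MvPolynomial (Fin n) K)) p := by
  classical
  set φ := algebraMap (MvPolynomial (Fin n) K) (FractionRing (MvPolynomial (Fin n) K)) with hφ
  have hφinj : Function.Injective φ :=
    IsFractionRing.injective (MvPolynomial (Fin n) K) (FractionRing (MvPolynomial (Fin n) K))
  obtain ⟨p, hp⟩ := jacobiDelta_dvd_asum (K := K) (n := n) b
  have hΔ0 : (jacobiDelta K n : MvPolynomial (Fin n) K) ≠ 0 := jacobiDelta_ne_zero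
  -- symmetry of p
  have hpsymm : p.IsSymmetric := by
    intro σ
    have h1 : rename ⇑σ (jacobiAsum K n b) = jacobiSgn K σ * jacobiDelta K n * rename ⇑σ p := by
      rw [hp, map_mul, jacobiRename_delta, mul_assoc]
    rw [jacobiRename_asum, hp, ← mul_assoc] at h1
    exact (mul_left_cancel₀ (mul_ne_zero (jacobiSgn_ne_zero σ) hΔ0) h1.symm)
  refine ⟨p, hpsymm, ?_⟩
  have hφΔ : φ (jacobiDelta K n) ≠ 0 := fun h => hΔ0 (hφinj (by rw [h, map_zero]))
  have hterm : ∀ w : Equiv.Perm (Fin n),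
      φ (rename ⇑w b) / φ (rename ⇑w (jacobiDelta K n)) =
        φ (jacobiSgn K w * rename ⇑w b) / φ (jacobiDelta K n) := by
    intro w
    rw [jacobiRename_delta, map_mul, map_mul]
    have hc : φ (jacobiSgn K w) * φ (jacobiSgn K w) = 1 := by
      rw [← map_mul, jacobiSgn_mul_self, map_one]
    have hcinv : (φ (jacobiSgn K w))⁻¹ = φ (jacobiSgn K w) := inv_eq_of_mul_eq_one_right hc
    rw [div_eq_mul_inv, div_eq_mul_inv, mul_inv, hcinv]
    ring
  have hΔdef : (∏ pr ∈ Finset.univ.filter (fun pr : Fin n × Fin n => pr.1 < pr.2),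
      (X pr.2 - X pr.1 : MvPolynomial (Fin n) K)) = jacobiDelta K n := rfl
  rw [hΔdef]
  calc
    ∑ w : Equiv.Perm (Fin n), φ (rename ⇑w b) / φ (rename ⇑w (jacobiDelta K n)) =
        ∑ w : Equiv.Perm (Fin n), φ (jacobiSgn K w * rename ⇑w b) / φ (jacobiDelta K n) :=
      Finset.sum_congr rfl fun w _ => hterm w
    _ = φ (jacobiAsum K n b) / φ (jacobiDelta K n) := by
      rw [← Finset.sum_div, ← map_sum]; rfl
    _ = φ p := by rw [hp, map_mul, mul_div_cancel_left₀ _ hφΔ]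
end

section
/- The Lagrange–Sylvester symmetrizer produces fully symmetric polynomials: if b ∈ K[x_1,...,x_n] is invariant under S_k × S_{n−k} (permuting x_1,...,x_k and x_{k+1},...,x_n separately), then ∑_{w ∈ S_n/(S_k×S_{n−k})} w·( b / ∏_{i=1}^{k} ∏_{j=k+1}^{n} (x_j − x_i) ), where the sum is over a set of coset representatives, is a well-defined S_n-invariant polynomial in x_1,...,x_n. -/
set_option linter.unusedSectionVars false
set_option linter.unnecessarySimpa false
set_option maxHeartbeats 1000000
open MvPolynomial Finset

noncomputable def LSvand (K : Type*) [Field K] (n : ℕ) : MvPolynomial (Fin n) K :=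
  ∏ i : Fin n, ∏ j ∈ Finset.Ioi i, (X j - X i)

noncomputable def LScross (K : Type*) [Field K] (n k : ℕ) : MvPolynomial (Fin n) K :=
  ∏ pr ∈ Finset.univ.filter (fun pr : Fin n × Fin n => (pr.1 : ℕ) < k ∧ k ≤ (pr.2 : ℕ)),
    (X pr.2 - X pr.1)

noncomputable def LSG (K : Type*) [Field K] (n k : ℕ) : MvPolynomial (Fin n) K :=
  ∏ pr ∈ Finset.univ.filter
      (fun pr : Fin n × Fin n => pr.1 < pr.2 ∧ ¬((pr.1 : ℕ) < k ∧ k ≤ (pr.2 : ℕ))),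
    (X pr.2 - X pr.1)

section Aux
variable {K : Type*} [Field K] [CharZero K] {n : ℕ}

lemma LSvand_eq_det : LSvand K n = Matrix.det (Matrix.vandermonde fun i => (X i : MvPolynomial (Fin n) K)) :=
  (Matrix.det_vandermonde _).symm

lemma LS_rename_vand (σ : Equiv.Perm (Fin n)) :
    rename ⇑σ (LSvand K n) = ((Equiv.Perm.sign σ : ℤ) : MvPolynomial (Fin n) K) * LSvand K n := by
  have h0 := RingHom.map_det (rename (R := K) ⇑σ).toRingHom
    (Matrix.vandermonde fun i => (X i : MvPolynomial (Fin n) K))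
  have h1 : (Matrix.vandermonde fun i => (X i : MvPolynomial (Fin n) K)).map
      (rename (R := K) ⇑σ).toRingHom =
      (Matrix.vandermonde fun i => (X i : MvPolynomial (Fin n) K)).submatrix σ id := by
    ext i j
    simp [Matrix.vandermonde]
  rw [LSvand_eq_det]
  show (rename (R := K) ⇑σ).toRingHom _ = _
  rw [h0, RingHom.mapMatrix_apply, h1, Matrix.det_permute, ← LSvand_eq_det]


lemma LSvand_eq_pairs :
    LSvand K n = ∏ pr ∈ Finset.univ.filter (fun pr : Fin n × Fin n => pr.1 < pr.2),
      (X pr.2 - X pr.1) := by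
  rw [Finset.prod_filter, Fintype.prod_prod_type]
  refine Finset.prod_congr rfl fun i _ => ?_
  have : Finset.Ioi i = Finset.univ.filter (fun j => i < j) := by ext j; simp
  rw [this, Finset.prod_filter]

lemma LSvand_split (k : ℕ) : LSvand K n = LScross K n k * LSG K n k := by
  rw [LSvand_eq_pairs,
    ← Finset.prod_filter_mul_prod_filter_not
      (Finset.univ.filter (fun pr : Fin n × Fin n => pr.1 < pr.2))
      (fun pr => (pr.1 : ℕ) < k ∧ k ≤ (pr.2 : ℕ))]
  congr 1
  · rw [Finset.filter_filter]
    refine Finset.prod_congr ?_ fun _ _ => rfl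
    ext pr
    simp only [Finset.mem_filter, Finset.mem_univ, true_and, LScross]
    constructor
    · rintro ⟨-, h⟩; exact h
    · rintro ⟨h1, h2⟩
      exact ⟨Fin.lt_def.mpr (lt_of_lt_of_le h1 h2), h1, h2⟩
  · rw [Finset.filter_filter]; rfl

lemma LSfactor_ne_zero {i j : Fin n} (h : i ≠ j) :
    (X j - X i : MvPolynomial (Fin n) K) ≠ 0 :=
  sub_ne_zero.mpr fun he => h (X_injective he).symm

lemma LScross_ne_zero (k : ℕ) : LScross K n k ≠ 0 := by
  refine Finset.prod_ne_zero_iff.mpr fun pr hpr => ?_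
  simp only [Finset.mem_filter, Finset.mem_univ, true_and] at hpr
  exact LSfactor_ne_zero (by intro h; rw [h] at hpr; omega)

lemma LSG_ne_zero (k : ℕ) : LSG K n k ≠ 0 := by
  refine Finset.prod_ne_zero_iff.mpr fun pr hpr => ?_
  simp only [Finset.mem_filter, Finset.mem_univ, true_and] at hpr
  exact LSfactor_ne_zero (ne_of_lt hpr.1)

lemma LSvand_ne_zero : LSvand K n ≠ 0 := by
  rw [LSvand_split (K := K) (n := n) 0]
  exact mul_ne_zero (LScross_ne_zero 0) (LSG_ne_zero 0)


lemma LS_prime_X (i : Fin n) : Prime (X i : MvPolynomial (Fin n) K) := by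
  cases n with
  | zero => exact i.elim0
  | succ m =>
    have h0 : Prime (X 0 : MvPolynomial (Fin (m + 1)) K) := by
      rw [← MulEquiv.prime_iff (MvPolynomial.finSuccEquiv K m).toMulEquiv]
      show Prime (MvPolynomial.finSuccEquiv K m (X 0))
      rw [MvPolynomial.finSuccEquiv_X_zero]
      exact Polynomial.prime_X
    have h1 := (MulEquiv.prime_iff (renameEquiv K (Equiv.swap (0 : Fin (m + 1)) i)).toMulEquiv).mpr h0
    have h2 : ((renameEquiv K (Equiv.swap (0 : Fin (m + 1)) i)).toMulEquiv (X 0)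
        : MvPolynomial (Fin (m+1)) K) = X i := by
      show (renameEquiv K (Equiv.swap (0 : Fin (m + 1)) i)) (X 0) = X i
      simp
    rwa [h2] at h1

lemma LS_prime_sub {i j : Fin n} (hij : i ≠ j) :
    Prime (X i - X j : MvPolynomial (Fin n) K) := by
  set f : Fin n → MvPolynomial (Fin n) K := fun l => if l = i then X i - X j else X l with hf
  set g : Fin n → MvPolynomial (Fin n) K := fun l => if l = i then X i + X j else X l with hg
  have hcomp1 : (aeval f).comp (aeval g) = AlgHom.id K (MvPolynomial (Fin n) K) := by
    apply MvPolynomial.algHom_ext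
    intro l
    simp only [AlgHom.comp_apply, aeval_X, AlgHom.id_apply]
    by_cases hl : l = i
    · subst hl
      simp [hg, hf, if_neg (Ne.symm hij)]
    · simp [hg, hf, if_neg hl]
  have hcomp2 : (aeval g).comp (aeval f) = AlgHom.id K (MvPolynomial (Fin n) K) := by
    apply MvPolynomial.algHom_ext
    intro l
    simp only [AlgHom.comp_apply, aeval_X, AlgHom.id_apply]
    by_cases hl : l = i
    · subst hl
      simp [hg, hf, if_neg (Ne.symm hij)]
    · simp [hg, hf, if_neg hl]
  let e : MvPolynomial (Fin n) K ≃ₐ[K] MvPolynomial (Fin n) K :=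
    AlgEquiv.ofAlgHom (aeval f) (aeval g) hcomp1 hcomp2
  have := (MulEquiv.prime_iff e.toMulEquiv).mpr (LS_prime_X i)
  have he : (e.toMulEquiv (X i) : MvPolynomial (Fin n) K) = X i - X j := by
    show e (X i) = X i - X j
    show (aeval f) (X i) = X i - X j
    simp [hf]
  rwa [he] at this


lemma LS_prod_primes_dvd {R : Type*} [CommRing R] [IsDomain R] {ι : Type*} [DecidableEq ι]
    (S : Finset ι) (f : ι → R) (A : R) (hp : ∀ i ∈ S, Prime (f i))
    (hnd : ∀ i ∈ S, ∀ j ∈ S, i ≠ j → ¬ f i ∣ f j) (hdvd : ∀ i ∈ S, f i ∣ A) :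
    (∏ i ∈ S, f i) ∣ A := by
  induction S using Finset.induction_on generalizing A with
  | empty => simpa using one_dvd A
  | @insert a S ha ih =>
    obtain ⟨B, hB⟩ := hdvd a (Finset.mem_insert_self a S)
    rw [Finset.prod_insert ha, hB]
    refine mul_dvd_mul_left (f a) (ih B (fun i hi => hp i (Finset.mem_insert_of_mem hi))
      (fun i hi j hj hij => hnd i (Finset.mem_insert_of_mem hi) j (Finset.mem_insert_of_mem hj) hij)
      (fun i hi => ?_))
    have hia : i ≠ a := fun h => ha (h ▸ hi)
    have h1 : f i ∣ f a * B := hB ▸ hdvd i (Finset.mem_insert_of_mem hi)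
    rcases (hp i (Finset.mem_insert_of_mem hi)).2.2 _ _ h1 with h | h
    · exact absurd h (hnd i (Finset.mem_insert_of_mem hi) a (Finset.mem_insert_self a S) hia)
    · exact h

lemma LS_dvd_sub_aeval (i j : Fin n) (A : MvPolynomial (Fin n) K) :
    (X i - X j) ∣ (A - aeval (fun l => if l = i then X j else X l) A) := by
  set g : Fin n → MvPolynomial (Fin n) K := fun l => if l = i then X j else X l with hg
  induction A using MvPolynomial.induction_on with
  | C a => simp [aeval_C, algebraMap_eq]
  | add p q hp hq =>
    have : p + q - aeval g (p + q) = (p - aeval g p) + (q - aeval g q) := by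
      rw [map_add]; ring
    rw [this]; exact dvd_add hp hq
  | mul_X p l hp =>
    have h1 : p * X l - aeval g (p * X l) =
        (p - aeval g p) * X l + aeval g p * (X l - g l) := by
      rw [map_mul, aeval_X]; ring
    rw [h1]
    refine dvd_add (Dvd.dvd.mul_right hp _) (Dvd.dvd.mul_left ?_ _)
    by_cases hl : l = i
    · subst hl; simp [hg]
    · simp [hg, if_neg hl]

lemma LS_not_dvd {pr pr' : Fin n × Fin n} (h1 : pr.1 < pr.2) (h1' : pr'.1 < pr'.2)
    (hne : pr ≠ pr') :
    ¬ (X pr.2 - X pr.1 : MvPolynomial (Fin n) K) ∣ (X pr'.2 - X pr'.1) := by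
  rintro ⟨q, hq⟩
  set v : Fin n → K := fun l => if l = pr.1 ∨ l = pr.2 then 0 else if l = pr'.1 then 1 else 2
    with hv
  apply_fun (eval v) at hq
  have hv1 : v pr.1 = 0 := by simp [hv]
  have hv2 : v pr.2 = 0 := by simp [hv]
  simp only [map_mul, map_sub, eval_X, hv1, hv2] at hq
  rw [sub_zero, zero_mul, sub_eq_zero] at hq
  -- hq : v pr'.2 = v pr'.1 ; derive contradiction
  have hnotboth : ¬(((pr'.1 = pr.1 ∨ pr'.1 = pr.2)) ∧ ((pr'.2 = pr.1 ∨ pr'.2 = pr.2))) := by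
    rintro ⟨ha, hb⟩
    rcases ha with ha | ha <;> rcases hb with hb | hb
    · rw [ha, hb] at h1'; exact lt_irrefl _ h1'
    · exact hne (Prod.ext (by rw [ha]) (by rw [hb]))
    · rw [ha, hb] at h1'; exact lt_irrefl _ (h1.trans h1')
    · rw [ha, hb] at h1'; exact lt_irrefl _ h1'
  have hne12 : pr'.1 ≠ pr'.2 := ne_of_lt h1'
  by_cases c1 : pr'.1 = pr.1 ∨ pr'.1 = pr.2 <;> by_cases c2 : pr'.2 = pr.1 ∨ pr'.2 = pr.2
  · exact hnotboth ⟨c1, c2⟩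
  · -- v pr'.1 = 0, v pr'.2 = 2
    have e1 : v pr'.1 = 0 := by simp [hv, c1]
    have e2 : v pr'.2 = 2 := by
      simp only [hv, if_neg c2, if_neg (Ne.symm hne12)]
    rw [e1, e2] at hq; norm_num at hq
  · have e1 : v pr'.1 = 1 := by simp [hv, if_neg c1]
    have e2 : v pr'.2 = 0 := by simp [hv, c2]
    rw [e1, e2] at hq; norm_num at hq
  · have e1 : v pr'.1 = 1 := by simp [hv, if_neg c1]
    have e2 : v pr'.2 = 2 := by
      simp only [hv, if_neg c2, if_neg (Ne.symm hne12)]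
    rw [e1, e2] at hq; norm_num at hq


lemma LS_rename_cross {k : ℕ} (h : Equiv.Perm (Fin n))
    (hh : ∀ i : Fin n, ((h i : ℕ) < k ↔ (i : ℕ) < k)) :
    rename ⇑h (LScross K n k) = LScross K n k := by
  unfold LScross
  rw [map_prod]
  simp only [map_sub, rename_X]
  refine Finset.prod_nbij' (fun pr => (h pr.1, h pr.2)) (fun pr => (h⁻¹ pr.1, h⁻¹ pr.2))
    ?_ ?_ ?_ ?_ ?_
  · intro pr hpr
    simp only [Finset.mem_filter, Finset.mem_univ, true_and] at hpr ⊢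
    exact ⟨(hh pr.1).mpr hpr.1, le_of_not_gt fun hc => (not_le.mpr ((hh pr.2).mp hc)) hpr.2⟩
  · intro pr hpr
    simp only [Finset.mem_filter, Finset.mem_univ, true_and] at hpr ⊢
    have h1 := hh (h⁻¹ pr.1)
    have h2 := hh (h⁻¹ pr.2)
    rw [show ∀ x, h (h⁻¹ x) = x from fun x => h.apply_symm_apply x] at h1 h2
    exact ⟨h1.mp hpr.1, le_of_not_gt fun hc => (not_le.mpr (h2.mpr hc)) hpr.2⟩
  · intro pr _; simp
  · intro pr _; simp
  · intro pr _; rfl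

lemma LS_rename_G {k : ℕ} (h : Equiv.Perm (Fin n))
    (hh : ∀ i : Fin n, ((h i : ℕ) < k ↔ (i : ℕ) < k)) :
    rename ⇑h (LSG K n k) =
      ((Equiv.Perm.sign h : ℤ) : MvPolynomial (Fin n) K) * LSG K n k := by
  have h1 := LS_rename_vand (K := K) (n := n) h
  rw [LSvand_split k, map_mul, LS_rename_cross h hh] at h1
  have h2 : LScross K n k * rename ⇑h (LSG K n k) =
      LScross K n k * (((Equiv.Perm.sign h : ℤ) : MvPolynomial (Fin n) K) * LSG K n k) := by
    rw [h1]; ring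
  exact mul_left_cancel₀ (LScross_ne_zero k) h2

lemma LS_alternating_dvd {A : MvPolynomial (Fin n) K}
    (hA : ∀ σ : Equiv.Perm (Fin n), rename ⇑σ A =
      ((Equiv.Perm.sign σ : ℤ) : MvPolynomial (Fin n) K) * A) :
    LSvand K n ∣ A := by
  rw [LSvand_eq_pairs]
  refine LS_prod_primes_dvd _ _ A ?_ ?_ ?_
  · intro pr hpr
    simp only [Finset.mem_filter, Finset.mem_univ, true_and] at hpr
    exact LS_prime_sub (ne_of_gt hpr)
  · intro pr hpr pr' hpr' hne
    simp only [Finset.mem_filter, Finset.mem_univ, true_and] at hpr hpr'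
    exact LS_not_dvd hpr hpr' hne
  · intro pr hpr
    simp only [Finset.mem_filter, Finset.mem_univ, true_and] at hpr
    set i := pr.2 with hi
    set j := pr.1 with hj
    have hij : i ≠ j := ne_of_gt hpr
    set g : Fin n → MvPolynomial (Fin n) K := fun l => if l = i then X j else X l with hg
    have hswap := hA (Equiv.swap i j)
    rw [Equiv.Perm.sign_swap hij] at hswap
    have hgs : g ∘ ⇑(Equiv.swap i j) = g := by
      funext l
      by_cases hl : l = i
      · subst hl; simp [hg, Equiv.swap_apply_left, if_neg (Ne.symm hij)]
      · by_cases hl2 : l = j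
        · subst hl2; simp [hg, Equiv.swap_apply_right]
        · simp [hg, Equiv.swap_apply_of_ne_of_ne hl hl2, if_neg hl]
    have h0 : aeval g A = 0 := by
      have e1 : aeval g (rename ⇑(Equiv.swap i j) A) = aeval g A := by
        rw [aeval_rename, hgs]
      rw [hswap] at e1
      have hneg : aeval g A = -(aeval g A) := by
        conv_lhs => rw [← e1]
        rw [show ((((-1 : ℤˣ) : ℤ)) : MvPolynomial (Fin n) K) = -1 by push_cast; ring]
        rw [neg_one_mul, map_neg]
      have h3 : (2 : MvPolynomial (Fin n) K) * aeval g A = 0 := by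
        rw [two_mul]; nth_rewrite 1 [hneg]; ring
      rcases mul_eq_zero.mp h3 with hc | hc
      · exact absurd hc two_ne_zero
      · exact hc
    have hd := LS_dvd_sub_aeval i j A
    rw [show (fun l => if l = i then X j else (X l : MvPolynomial (Fin n) K)) = g from rfl,
      h0, sub_zero] at hd
    exact hd

end Aux

/-- The Lagrange–Sylvester symmetrizer produces fully symmetric polynomials.
If `b ∈ K[x₁,…,xₙ]` is invariant under `H = S_k × S_{n-k}` (permutations preserving the
blocks `{i : i < k}` and `{i : k ≤ i}`), then there is a symmetric polynomial `p` such
that for every set `R` of representatives of the left cosets `Sₙ/(S_k × S_{n-k})`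
(each coset contains exactly one element of `R`),
`∑_{w ∈ R} w·( b / ∏_{i<k≤j}(xⱼ - xᵢ) ) = p` in `K(x₁,…,xₙ)`;
in particular the sum is a well-defined `Sₙ`-invariant polynomial. -/
theorem lagrange_sylvester_symmetrizer_is_symmetric_polynomial
    {K : Type*} [Field K] [CharZero K] (n k : ℕ) (hk : k ≤ n)
    (b : MvPolynomial (Fin n) K)
    (hb : ∀ h : Equiv.Perm (Fin n),
      (∀ i : Fin n, ((h i : ℕ) < k ↔ (i : ℕ) < k)) → rename ⇑h b = b) :
    ∃ p : MvPolynomial (Fin n) K, p.IsSymmetric ∧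
      ∀ R : Finset (Equiv.Perm (Fin n)),
        (∀ w : Equiv.Perm (Fin n), ∃! r : Equiv.Perm (Fin n),
          r ∈ R ∧ ∀ i : Fin n, (((w⁻¹ * r) i : ℕ) < k ↔ (i : ℕ) < k)) →
        ∑ w ∈ R,
            algebraMap (MvPolynomial (Fin n) K) (FractionRing (MvPolynomial (Fin n) K))
                (rename ⇑w b) /
              algebraMap (MvPolynomial (Fin n) K) (FractionRing (MvPolynomial (Fin n) K))
                (rename ⇑w
                  (∏ pr ∈ Finset.univ.filter
                      (fun pr : Fin n × Fin n => (pr.1 : ℕ) < k ∧ k ≤ (pr.2 : ℕ)),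
                    (X pr.2 - X pr.1))) =
          algebraMap (MvPolynomial (Fin n) K) (FractionRing (MvPolynomial (Fin n) K)) p := by
  classical
  set F := FractionRing (MvPolynomial (Fin n) K) with hF
  set alg := algebraMap (MvPolynomial (Fin n) K) F with halgdef
  set B : MvPolynomial (Fin n) K := b * LSG K n k with hB
  set A : MvPolynomial (Fin n) K :=
    ∑ w : Equiv.Perm (Fin n),
      ((Equiv.Perm.sign w : ℤ) : MvPolynomial (Fin n) K) * rename ⇑w B with hA
  -- A is alternating
  have hAalt : ∀ σ : Equiv.Perm (Fin n), rename ⇑σ A =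
      ((Equiv.Perm.sign σ : ℤ) : MvPolynomial (Fin n) K) * A := by
    intro σ
    calc rename ⇑σ A
        = ∑ w : Equiv.Perm (Fin n),
          ((Equiv.Perm.sign σ : ℤ) : MvPolynomial (Fin n) K) *
            (((Equiv.Perm.sign (σ * w) : ℤ) : MvPolynomial (Fin n) K) *
              rename ⇑(σ * w) B) := by
          rw [hA, map_sum]
          refine Finset.sum_congr rfl fun w _ => ?_
          rw [map_mul, map_intCast, rename_rename]
          have hcoe : ⇑σ ∘ ⇑w = ⇑(σ * w) := rfl
          rw [hcoe]
          have hs : (Equiv.Perm.sign σ) * Equiv.Perm.sign (σ * w) = Equiv.Perm.sign w := by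
            rw [Equiv.Perm.sign_mul, ← mul_assoc, Int.units_mul_self, one_mul]
          have hs2 : ((Equiv.Perm.sign w : ℤ) : MvPolynomial (Fin n) K) =
              ((Equiv.Perm.sign σ : ℤ) : MvPolynomial (Fin n) K) *
                ((Equiv.Perm.sign (σ * w) : ℤ) : MvPolynomial (Fin n) K) := by
            rw [← Int.cast_mul]
            norm_cast
            rw [hs]
          rw [hs2, mul_assoc]
      _ = ((Equiv.Perm.sign σ : ℤ) : MvPolynomial (Fin n) K) * A := by
          rw [← Finset.mul_sum]
          congr 1
          rw [hA]
          exact Fintype.sum_equiv (Equiv.mulLeft σ) _ _ (fun w => rfl)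
  obtain ⟨q, hq⟩ := LS_alternating_dvd hAalt
  -- q is symmetric
  have hqsym : ∀ σ : Equiv.Perm (Fin n), rename ⇑σ q = q := by
    intro σ
    have h1 := hAalt σ
    rw [hq, map_mul, LS_rename_vand σ] at h1
    have h2 : ((Equiv.Perm.sign σ : ℤ) : MvPolynomial (Fin n) K) *
        (LSvand K n * rename ⇑σ q) =
        ((Equiv.Perm.sign σ : ℤ) : MvPolynomial (Fin n) K) * (LSvand K n * q) := by
      rw [← h1]; ring
    have hsne : ((Equiv.Perm.sign σ : ℤ) : MvPolynomial (Fin n) K) ≠ 0 := by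
      rcases Int.units_eq_one_or (Equiv.Perm.sign σ) with h | h <;> rw [h] <;> norm_num
    exact mul_left_cancel₀ LSvand_ne_zero (mul_left_cancel₀ hsne h2)
  set Hs : Finset (Equiv.Perm (Fin n)) :=
    Finset.univ.filter (fun h : Equiv.Perm (Fin n) =>
      ∀ i : Fin n, ((h i : ℕ) < k ↔ (i : ℕ) < k)) with hHs
  set m : ℕ := Hs.card with hm
  have h1Hs : (1 : Equiv.Perm (Fin n)) ∈ Hs := by simp [hHs]
  have hmpos : 0 < m := Finset.card_pos.mpr ⟨1, h1Hs⟩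
  have hmK : (m : K) ≠ 0 := Nat.cast_ne_zero.mpr hmpos.ne'
  refine ⟨C ((m : K)⁻¹) * q, ?_, ?_⟩
  · intro e
    rw [map_mul, rename_C, hqsym]
  · intro R hR
    have hvandne : alg (LSvand K n) ≠ 0 := by
      rw [Ne, IsFractionRing.to_map_eq_zero_iff]
      exact LSvand_ne_zero
    -- termwise identity
    have hterm : ∀ w : Equiv.Perm (Fin n),
        alg (rename ⇑w b) / alg (rename ⇑w (LScross K n k)) =
          ((Equiv.Perm.sign w : ℤ) : F) * (alg (rename ⇑w B) / alg (LSvand K n)) := by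
      intro w
      have hrinj : Function.Injective (rename (R := K) ⇑w) :=
        rename_injective _ w.injective
      have hGne : alg (rename ⇑w (LSG K n k)) ≠ 0 := by
        rw [Ne, IsFractionRing.to_map_eq_zero_iff]
        intro h0
        exact LSG_ne_zero k (hrinj (by rw [h0, map_zero]))
      have hv : alg (rename ⇑w (LScross K n k)) * alg (rename ⇑w (LSG K n k)) =
          ((Equiv.Perm.sign w : ℤ) : F) * alg (LSvand K n) := by
        rw [← map_mul, ← map_mul, ← LSvand_split k, LS_rename_vand w, map_mul, map_intCast]
      have hbG : alg (rename ⇑w b) * alg (rename ⇑w (LSG K n k)) = alg (rename ⇑w B) := by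
        rw [← map_mul, ← map_mul, hB]
      have hinv : ((Equiv.Perm.sign w : ℤ) : F)⁻¹ = ((Equiv.Perm.sign w : ℤ) : F) := by
        rcases Int.units_eq_one_or (Equiv.Perm.sign w) with h | h <;> rw [h] <;> norm_num
      calc alg (rename ⇑w b) / alg (rename ⇑w (LScross K n k))
          = alg (rename ⇑w b) * alg (rename ⇑w (LSG K n k)) /
            (alg (rename ⇑w (LScross K n k)) * alg (rename ⇑w (LSG K n k))) := by
            rw [mul_div_mul_right _ _ hGne]
        _ = alg (rename ⇑w B) / (((Equiv.Perm.sign w : ℤ) : F) * alg (LSvand K n)) := by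
            rw [hbG, hv]
        _ = ((Equiv.Perm.sign w : ℤ) : F) * (alg (rename ⇑w B) / alg (LSvand K n)) := by
            rw [div_mul_eq_div_div, div_eq_mul_inv (alg (rename ⇑w B)), hinv,
              mul_comm (alg (rename ⇑w B)), mul_div_assoc]
    set AR : MvPolynomial (Fin n) K :=
      ∑ w ∈ R, ((Equiv.Perm.sign w : ℤ) : MvPolynomial (Fin n) K) * rename ⇑w B with hARdef
    have hsum1 : ∑ w ∈ R, alg (rename ⇑w b) / alg (rename ⇑w (LScross K n k)) =
        alg AR / alg (LSvand K n) := by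
      rw [hARdef, map_sum, Finset.sum_div]
      refine Finset.sum_congr rfl fun w _ => ?_
      rw [hterm w, map_mul alg, map_intCast alg, mul_div_assoc]
    -- fiber decomposition
    have hcover : (Finset.univ : Finset (Equiv.Perm (Fin n))) =
        R.biUnion (fun r : Equiv.Perm (Fin n) => Finset.univ.filter fun w : Equiv.Perm (Fin n) =>
          ∀ i : Fin n, (((w⁻¹ * r) i : ℕ) < k ↔ (i : ℕ) < k)) := by
      ext w
      simp only [Finset.mem_univ, true_iff, Finset.mem_biUnion, Finset.mem_filter, true_and]
      obtain ⟨r, ⟨hrR, hr⟩, -⟩ := hR w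
      exact ⟨r, hrR, hr⟩
    have hdisj : Set.PairwiseDisjoint (↑R : Set (Equiv.Perm (Fin n))) (fun r : Equiv.Perm (Fin n) => Finset.univ.filter fun w : Equiv.Perm (Fin n) =>
        ∀ i : Fin n, (((w⁻¹ * r) i : ℕ) < k ↔ (i : ℕ) < k)) := by
      intro r1 h1 r2 h2 hne
      refine Finset.disjoint_left.mpr fun {w} hw1 hw2 => ?_
      simp only [Finset.mem_filter, Finset.mem_univ, true_and] at hw1 hw2
      obtain ⟨r0, hr0, huniq⟩ := hR w
      exact hne ((huniq r1 ⟨Finset.mem_coe.mp h1, hw1⟩).trans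
        (huniq r2 ⟨Finset.mem_coe.mp h2, hw2⟩).symm)
    have hfib : ∀ r ∈ R, ∑ w ∈ (Finset.univ.filter fun w : Equiv.Perm (Fin n) =>
          ∀ i : Fin n, (((w⁻¹ * r) i : ℕ) < k ↔ (i : ℕ) < k)),
        ((Equiv.Perm.sign w : ℤ) : MvPolynomial (Fin n) K) * rename ⇑w B =
        (m : MvPolynomial (Fin n) K) *
          (((Equiv.Perm.sign r : ℤ) : MvPolynomial (Fin n) K) * rename ⇑r B) := by
      intro r hrR
      have hconst : ∀ w ∈ (Finset.univ.filter fun w : Equiv.Perm (Fin n) =>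
            ∀ i : Fin n, (((w⁻¹ * r) i : ℕ) < k ↔ (i : ℕ) < k)),
          ((Equiv.Perm.sign w : ℤ) : MvPolynomial (Fin n) K) * rename ⇑w B =
          ((Equiv.Perm.sign r : ℤ) : MvPolynomial (Fin n) K) * rename ⇑r B := by
        intro w hw
        simp only [Finset.mem_filter, Finset.mem_univ, true_and] at hw
        have key : ((Equiv.Perm.sign r : ℤ) : MvPolynomial (Fin n) K) * rename ⇑r B =
            ((Equiv.Perm.sign w : ℤ) : MvPolynomial (Fin n) K) * rename ⇑w B := by
          set h : Equiv.Perm (Fin n) := w⁻¹ * r with hh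
          have hrw : r = w * h := (mul_inv_cancel_left w r).symm
          have hBh : rename ⇑h B = ((Equiv.Perm.sign h : ℤ) : MvPolynomial (Fin n) K) * B := by
            rw [hB, map_mul, hb h hw, LS_rename_G h hw]; ring
          rw [hrw]
          have hren : rename ⇑(w * h) B = rename ⇑w (rename ⇑h B) := by
            rw [rename_rename]; rfl
          have hcast : (rename (R := K) ⇑w) (((Equiv.Perm.sign h : ℤ) : MvPolynomial (Fin n) K)) =
              ((Equiv.Perm.sign h : ℤ) : MvPolynomial (Fin n) K) :=
            map_intCast (rename ⇑w : MvPolynomial (Fin n) K →ₐ[K] MvPolynomial (Fin n) K) _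
          rw [hren, hBh, map_mul (rename ⇑w), hcast]
          have hsign : ((Equiv.Perm.sign (w * h) : ℤ) : MvPolynomial (Fin n) K) =
              ((Equiv.Perm.sign w : ℤ) : MvPolynomial (Fin n) K) *
              ((Equiv.Perm.sign h : ℤ) : MvPolynomial (Fin n) K) := by
            rw [← Int.cast_mul]
            norm_cast
            rw [Equiv.Perm.sign_mul]
          have hss : ((Equiv.Perm.sign h : ℤ) : MvPolynomial (Fin n) K) *
              ((Equiv.Perm.sign h : ℤ) : MvPolynomial (Fin n) K) = 1 := by
            rcases Int.units_eq_one_or (Equiv.Perm.sign h) with hs1 | hs1 <;>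
              rw [hs1] <;> norm_num
          calc ((Equiv.Perm.sign (w * h) : ℤ) : MvPolynomial (Fin n) K) *
                (((Equiv.Perm.sign h : ℤ) : MvPolynomial (Fin n) K) * rename ⇑w B)
              = (((Equiv.Perm.sign h : ℤ) : MvPolynomial (Fin n) K) *
                  ((Equiv.Perm.sign h : ℤ) : MvPolynomial (Fin n) K)) *
                (((Equiv.Perm.sign w : ℤ) : MvPolynomial (Fin n) K) * rename ⇑w B) := by
                rw [hsign]; ring
            _ = ((Equiv.Perm.sign w : ℤ) : MvPolynomial (Fin n) K) * rename ⇑w B := by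
                rw [hss, one_mul]
        exact key.symm
      rw [Finset.sum_congr rfl hconst, Finset.sum_const]
      have hcard : (Finset.univ.filter fun w : Equiv.Perm (Fin n) =>
          ∀ i : Fin n, (((w⁻¹ * r) i : ℕ) < k ↔ (i : ℕ) < k)).card = m := by
        rw [hm, hHs]
        refine Finset.card_nbij' (fun w => w⁻¹ * r) (fun h => r * h⁻¹) ?_ ?_ ?_ ?_
        · intro w hw
          simp only [Finset.mem_coe, Finset.mem_filter, Finset.mem_univ, true_and] at hw ⊢
          exact hw
        · intro h hh
          simp only [Finset.mem_coe, Finset.mem_filter, Finset.mem_univ, true_and] at hh ⊢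
          have : (r * h⁻¹)⁻¹ * r = h := by group
          rw [this]
          exact hh
        · intro w hw
          group
        · intro h hh
          group
      rw [hcard, nsmul_eq_mul]
    have hmA : (m : MvPolynomial (Fin n) K) * AR = A := by
      rw [hA, hcover, Finset.sum_biUnion hdisj, Finset.sum_congr rfl hfib, ← Finset.mul_sum,
        hARdef]
    have halg : (m : F) * alg AR = alg (LSvand K n) * alg q := by
      have h7 := congrArg alg hmA
      rw [map_mul, map_natCast] at h7
      rw [h7, hq, map_mul]
    have hmF : (m : F) ≠ 0 := Nat.cast_ne_zero.mpr hmpos.ne'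
    have h5 : alg AR = (m : F)⁻¹ * (alg (LSvand K n) * alg q) := by
      rw [← halg, ← mul_assoc, inv_mul_cancel₀ hmF, one_mul]
    have hCm : alg (C ((m : K)⁻¹)) = (m : F)⁻¹ := by
      have hmalg : (m : F) = alg (C ((m : K))) := by
        rw [map_natCast (C : K →+* MvPolynomial (Fin n) K), map_natCast]
      have h6 : alg (C ((m : K)⁻¹)) * (m : F) = 1 := by
        rw [hmalg, ← map_mul, ← C_mul, inv_mul_cancel₀ hmK, C_1, map_one]
      exact inv_eq_of_mul_eq_one_left h6 ▸ rfl
    have hfinal : ∑ w ∈ R, alg (rename ⇑w b) / alg (rename ⇑w (LScross K n k)) =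
        alg (C ((m : K)⁻¹) * q) := by
      rw [hsum1, h5, map_mul, hCm, mul_div_assoc, mul_comm (alg (LSvand K n)), mul_div_assoc,
        div_self hvandne, mul_one]
    exact hfinal
end
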